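/- Let (e_j)_{j≥1} be an orthonormal basis of a separable Hilbert space H and set a := ∑_{j≥1} 2^{-j/2} e_j. Then Id - a⊗a ≥ 0, but for every n ≥ 1 and every ε > 0, Id - a⊗a - ε eₙ⊗eₙ is not positive semidefinite. -/

import Mathlib

open scoped InnerProductSpace

/-- Let (eⱼ)_{j≥1} be an orthonormal basis of a separable Hilbert space and
a = ∑_{j≥1} 2^{-j/2} eⱼ. Then Id - a⊗a ≥ 0, but for every n and ε > 0 the operator
Id - a⊗a - ε eₙ⊗eₙ is not positive semidefinite. -/
theorem stmt7 {H : Type*} [NormedAddCommGroup H] [InnerProductSpace ℝ H]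
    [CompleteSpace H] (e : HilbertBasis ℕ ℝ H)
    (a : H) (ha : a = ∑' j : ℕ, ((2 : ℝ) ^ (-((j : ℝ) + 1) / 2)) • e j) :
    (∀ x : H, 0 ≤ ⟪x, x⟫_ℝ - ⟪a, x⟫_ℝ ^ 2) ∧
    ∀ (n : ℕ) (ε : ℝ), 0 < ε →
      ∃ x : H, ⟪x, x⟫_ℝ - ⟪a, x⟫_ℝ ^ 2 - ε * ⟪e n, x⟫_ℝ ^ 2 < 0 := by
  set c : ℕ → ℝ := fun j => (2 : ℝ) ^ (-((j : ℝ) + 1) / 2) with hc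
  have hcpos : ∀ j, 0 < c j := fun j => Real.rpow_pos_of_pos (by norm_num) _
  have hsq : ∀ j : ℕ, c j ^ 2 = (1 / 2 : ℝ) ^ (j + 1) := by
    intro j
    have h1 : c j ^ 2 = (2 : ℝ) ^ ((-((j : ℝ) + 1) / 2) * 2) := by
      rw [← Real.rpow_natCast (c j) 2, ← Real.rpow_mul (by norm_num)]
      norm_num
    rw [h1]
    have : (-((j : ℝ) + 1) / 2) * 2 = -(((j + 1 : ℕ) : ℝ)) := by push_cast; ring
    rw [this, Real.rpow_neg (by norm_num), Real.rpow_natCast]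
    rw [one_div, inv_pow]
  have hsum : HasSum (fun j : ℕ => c j ^ 2) 1 := by
    have hg : HasSum (fun j : ℕ => (1 / 2 : ℝ) ^ j) 2 := by
      have := hasSum_geometric_of_lt_one (r := (1 / 2 : ℝ)) (by norm_num) (by norm_num)
      norm_num at this
      exact this
    have := hg.mul_left (1 / 2 : ℝ)
    simp only [hsq]
    convert this using 2 with j
    · rfl
    · rw [pow_succ]; ring
    · norm_num
  have hmem : Memℓp c 2 := by
    apply memℓp_gen
    have h2 : (2 : ENNReal).toReal = 2 := by norm_num
    rw [h2]
    refine hsum.summable.congr fun j => ?_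
    rw [Real.norm_eq_abs, abs_of_pos (hcpos j), ← Real.rpow_natCast (c j) 2]
    norm_num
  set f : lp (fun _ : ℕ => ℝ) 2 := ⟨c, hmem⟩ with hf
  have haf : a = e.repr.symm f := by
    rw [ha]
    exact (e.hasSum_repr_symm f).tsum_eq.symm ▸ rfl
  have hrepr : e.repr a = f := by rw [haf]; simp
  have hinner_e : ∀ n, ⟪e n, a⟫_ℝ = c n := by
    intro n
    rw [← e.repr_apply_apply, hrepr]
  have hinner_a : ⟪a, a⟫_ℝ = 1 := by
    have := e.repr.inner_map_map a a
    rw [hrepr] at this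
    rw [← this, lp.inner_eq_tsum]
    have : ∀ i : ℕ, ⟪f i, f i⟫_ℝ = c i ^ 2 := by
      intro i
      have hfi : f i = c i := rfl
      rw [hfi, real_inner_self_eq_norm_sq, Real.norm_eq_abs, sq_abs]
    simp only [this]
    exact hsum.tsum_eq
  constructor
  · intro x
    have hCS := real_inner_mul_inner_self_le a x
    rw [hinner_a] at hCS
    nlinarith [hCS]
  · intro n ε hε
    refine ⟨a, ?_⟩
    rw [hinner_a, hinner_e]
    nlinarith [mul_pos hε (pow_pos (hcpos n) 2)]
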